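/- arXiv:0909.1557 — 3 statements merged into one kernel-verified Lean document; each statement's English description precedes it below -/
import Mathlib

section
/- Let d ≥ 1, let p : Fin d → ℝ be a probability vector with Shannon entropy E := −∑ᵢ p i · log₂(p i) and surprisal variance σ² := ∑ᵢ p i · (log₂(p i))² − E². Then for every ε with 0 < ε < 1 and every n ≥ 1 there exists a nonempty finite set S of strings x : Fin n → Fin d with ∑_{x ∈ S} ∏ᵢ p(x i) ≥ 1 − ε and log₂(|S|) + log₂( max_{x ∈ S} ∏ᵢ p(x i) ) ≤ 2·σ·√(n/ε). In other words, the ε-perturbed entanglement spread of the n-fold tensor power of a pure state with Schmidt-coefficient distribution p is at most 2σ√(n/ε) = O(√n). -/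
set_option maxHeartbeats 1000000

private lemma fub {n d : ℕ} (F : Fin n → Fin d → ℝ) :
    ∑ x : Fin n → Fin d, ∏ j, F j (x j) = ∏ j, ∑ k, F j k :=
  (Fintype.prod_sum F).symm

private lemma fub' {n d : ℕ} (F : Fin n → Fin d → ℝ) (G : (Fin n → Fin d) → ℝ)
    (hG : ∀ x, G x = ∏ j, F j (x j)) :
    ∑ x : Fin n → Fin d, G x = ∏ j, ∑ k, F j k := by
  rw [Finset.sum_congr rfl fun x _ => hG x]
  exact fub F

private lemma single_marg {n d : ℕ} {p : Fin d → ℝ} (hp1 : ∑ k, p k = 1)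
    (h : Fin d → ℝ) (i : Fin n) :
    ∑ x : Fin n → Fin d, (∏ j, p (x j)) * h (x i) = ∑ k, p k * h k := by
  have e1 : ∀ x : Fin n → Fin d,
      (∏ j, p (x j)) * h (x i) = ∏ j, (p (x j) * if i = j then h (x j) else 1) := by
    intro x
    rw [Finset.prod_mul_distrib, Finset.prod_ite_eq]
    simp
  have step1 : ∑ x : Fin n → Fin d, (∏ j, p (x j)) * h (x i)
      = ∏ j : Fin n, ∑ k, p k * if i = j then h k else 1 :=
    fub' (fun j k => p k * if i = j then h k else 1) _ e1
  rw [step1]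
  have e2 : ∀ j : Fin n, (∑ k, p k * if i = j then h k else 1)
      = if i = j then (∑ k, p k * h k) else 1 := by
    intro j
    by_cases hj : i = j <;> simp [hj, hp1]
  rw [Finset.prod_congr rfl fun j _ => e2 j, Finset.prod_ite_eq]
  simp

private lemma pair_marg {n d : ℕ} {p : Fin d → ℝ} (hp1 : ∑ k, p k = 1)
    (h : Fin d → ℝ) (i j : Fin n) (hij : i ≠ j) :
    ∑ x : Fin n → Fin d, (∏ l, p (x l)) * (h (x i) * h (x j))
      = (∑ k, p k * h k) * (∑ k, p k * h k) := by
  have e1 : ∀ x : Fin n → Fin d,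
      (∏ l, p (x l)) * (h (x i) * h (x j))
        = ∏ l, (p (x l) * (if i = l then h (x l) else 1) * (if j = l then h (x l) else 1)) := by
    intro x
    rw [Finset.prod_mul_distrib, Finset.prod_mul_distrib, Finset.prod_ite_eq,
      Finset.prod_ite_eq]
    simp [mul_assoc]
  have step1 : ∑ x : Fin n → Fin d, (∏ l, p (x l)) * (h (x i) * h (x j))
      = ∏ l : Fin n, ∑ k, p k * (if i = l then h k else 1) * (if j = l then h k else 1) :=
    fub' (fun l k => p k * (if i = l then h k else 1) * (if j = l then h k else 1)) _ e1
  rw [step1]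
  have e2 : ∀ l : Fin n,
      (∑ k, p k * (if i = l then h k else 1) * (if j = l then h k else 1))
      = (if i = l then (∑ k, p k * h k) else 1) * (if j = l then (∑ k, p k * h k) else 1) := by
    intro l
    by_cases hi : i = l
    · have hj : ¬ j = l := fun e => hij (hi.trans e.symm)
      simp [hi, hj]
    · by_cases hj : j = l <;> simp [hi, hj, hp1]
  rw [Finset.prod_congr rfl fun l _ => e2 l, Finset.prod_mul_distrib, Finset.prod_ite_eq,
    Finset.prod_ite_eq]
  simp

private lemma second_moment {n d : ℕ} {p : Fin d → ℝ} (hp1 : ∑ k, p k = 1)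
    (f : Fin d → ℝ) (hf : ∑ k, p k * f k = 0) :
    ∑ x : Fin n → Fin d, (∏ l, p (x l)) * (∑ i, f (x i)) ^ 2
      = n * ∑ k, p k * f k ^ 2 := by
  have e1 : ∀ x : Fin n → Fin d,
      (∏ l, p (x l)) * (∑ i, f (x i)) ^ 2
        = ∑ i : Fin n, ∑ j : Fin n, (∏ l, p (x l)) * (f (x i) * f (x j)) := by
    intro x
    rw [sq, Finset.sum_mul_sum, Finset.mul_sum]
    exact Finset.sum_congr rfl fun i _ => by rw [Finset.mul_sum]
  rw [Finset.sum_congr rfl fun x _ => e1 x, Finset.sum_comm]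
  have e2 : ∀ (i j : Fin n), ∑ x : Fin n → Fin d, (∏ l, p (x l)) * (f (x i) * f (x j))
      = if i = j then ∑ k, p k * f k ^ 2 else 0 := by
    intro i j
    by_cases hij : i = j
    · subst hij
      rw [if_pos rfl]
      have := single_marg (n := n) hp1 (fun k => f k * f k) i
      simpa [sq] using this
    · rw [if_neg hij, pair_marg hp1 f i j hij, hf, mul_zero]
  have e3 : ∀ i : Fin n,
      ∑ x : Fin n → Fin d, ∑ j : Fin n, (∏ l, p (x l)) * (f (x i) * f (x j))
      = ∑ k, p k * f k ^ 2 := by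
    intro i
    rw [Finset.sum_comm]
    rw [Finset.sum_congr rfl fun j _ => e2 i j]
    simp
  rw [Finset.sum_congr rfl fun i _ => e3 i]
  simp [mul_comm]

/-- The ε-perturbed entanglement spread of `n` copies of a pure state with
Schmidt-coefficient distribution `p` is `O(√n)`: there is a nonempty set `S` of strings
of total probability at least `1 - ε` with
`log₂ |S| + log₂ (max_{x ∈ S} ∏ᵢ p (x i)) ≤ 2σ√(n/ε)`. -/
theorem perturbed_spread_sqrt (d : ℕ) (hd : 1 ≤ d) (p : Fin d → ℝ)
    (hp0 : ∀ i, 0 ≤ p i) (hp1 : ∑ i, p i = 1)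
    (E σ : ℝ) (hE : E = -∑ i, p i * Real.logb 2 (p i))
    (hσ : σ = Real.sqrt ((∑ i, p i * (Real.logb 2 (p i)) ^ 2) - E ^ 2))
    (ε : ℝ) (hε0 : 0 < ε) (hε1 : ε < 1) (n : ℕ) (hn : 1 ≤ n) :
    ∃ (S : Finset (Fin n → Fin d)) (hS : S.Nonempty),
      1 - ε ≤ ∑ x ∈ S, ∏ i, p (x i) ∧
      Real.logb 2 (S.card : ℝ) + Real.logb 2 (S.sup' hS fun x => ∏ i, p (x i)) ≤
        2 * σ * Real.sqrt (n / ε) := by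
  classical
  set f : Fin d → ℝ := fun k => Real.logb 2 (p k) + E with hfdef
  clear_value f
  have hpL : ∑ k, p k * Real.logb 2 (p k) = -E := by rw [hE, neg_neg]
  have hfA : ∑ k, p k * f k = 0 := by
    have e : ∀ k, p k * f k = p k * Real.logb 2 (p k) + E * p k := by
      intro k; rw [hfdef]; ring
    rw [Finset.sum_congr rfl fun k _ => e k, Finset.sum_add_distrib, ← Finset.mul_sum,
      hp1, hpL]
    ring
  set V : ℝ := (∑ i, p i * (Real.logb 2 (p i)) ^ 2) - E ^ 2 with hVdef
  clear_value V
  have hfV : ∑ k, p k * f k ^ 2 = V := by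
    have e : ∀ k, p k * f k ^ 2
        = p k * Real.logb 2 (p k) ^ 2 + (2 * E) * (p k * Real.logb 2 (p k)) + E ^ 2 * p k := by
      intro k; rw [hfdef]; ring
    rw [Finset.sum_congr rfl fun k _ => e k, Finset.sum_add_distrib, Finset.sum_add_distrib,
      ← Finset.mul_sum, ← Finset.mul_sum, hp1, hpL, hVdef]
    ring
  have key : ∑ x : Fin n → Fin d, (∏ l, p (x l)) * (∑ i, f (x i)) ^ 2 = n * V := by
    rw [second_moment hp1 f hfA, hfV]
  have hPnn : ∀ x : Fin n → Fin d, 0 ≤ ∏ l, p (x l) :=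
    fun x => Finset.prod_nonneg fun i _ => hp0 _
  have hnpos : (0 : ℝ) < n := by exact_mod_cast Nat.lt_of_lt_of_le Nat.zero_lt_one hn
  have hVnn : 0 ≤ V := by
    have h1 : 0 ≤ ∑ x : Fin n → Fin d, (∏ l, p (x l)) * (∑ i, f (x i)) ^ 2 :=
      Finset.sum_nonneg fun x _ => mul_nonneg (hPnn x) (sq_nonneg _)
    nlinarith [key]
  have hσ2 : σ ^ 2 = V := by rw [hσ]; exact Real.sq_sqrt hVnn
  have hσnn : 0 ≤ σ := hσ ▸ Real.sqrt_nonneg _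
  set t : ℝ := σ * Real.sqrt (↑n / ε) with htdef
  clear_value t
  have htnn : 0 ≤ t := by rw [htdef]; exact mul_nonneg hσnn (Real.sqrt_nonneg _)
  have ht2 : t ^ 2 = σ ^ 2 * (↑n / ε) := by
    rw [htdef, mul_pow, Real.sq_sqrt (by positivity)]
  set S : Finset (Fin n → Fin d) :=
    Finset.univ.filter (fun x => 0 < ∏ l, p (x l) ∧ (∑ i, f (x i)) ^ 2 ≤ t ^ 2) with hSdef
  clear_value S
  have htot : ∑ x : Fin n → Fin d, ∏ l, p (x l) = 1 := by
    rw [fub (fun _ : Fin n => p)]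
    simp [hp1]
  -- Chebyshev
  set Sc : Finset (Fin n → Fin d) :=
    Finset.univ.filter (fun x => ¬(0 < ∏ l, p (x l) ∧ (∑ i, f (x i)) ^ 2 ≤ t ^ 2)) with hScdef
  clear_value Sc
  have hterm : ∀ x ∈ Sc, (∏ l, p (x l)) * t ^ 2 ≤ (∏ l, p (x l)) * (∑ i, f (x i)) ^ 2 := by
    intro x hx
    rw [hScdef] at hx
    rcases eq_or_lt_of_le (hPnn x) with h0 | h0
    · rw [← h0]; simp
    · have hc := (Finset.mem_filter.mp hx).2
      push_neg at hc
      exact mul_le_mul_of_nonneg_left (le_of_lt (hc h0)) (le_of_lt h0)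
  have hsum1 : t ^ 2 * ∑ x ∈ Sc, ∏ l, p (x l) ≤ ↑n * V := by
    rw [Finset.mul_sum]
    calc ∑ x ∈ Sc, t ^ 2 * ∏ l, p (x l)
        = ∑ x ∈ Sc, (∏ l, p (x l)) * t ^ 2 := by
          exact Finset.sum_congr rfl fun x _ => mul_comm _ _
      _ ≤ ∑ x ∈ Sc, (∏ l, p (x l)) * (∑ i, f (x i)) ^ 2 := Finset.sum_le_sum hterm
      _ ≤ ∑ x : Fin n → Fin d, (∏ l, p (x l)) * (∑ i, f (x i)) ^ 2 :=
          Finset.sum_le_sum_of_subset_of_nonneg (Finset.subset_univ Sc)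
            (fun x _ _ => mul_nonneg (hPnn x) (sq_nonneg _))
      _ = ↑n * V := key
  have cheb : ∑ x ∈ Sc, ∏ l, p (x l) ≤ ε := by
    rcases eq_or_lt_of_le hσnn with hσ0 | hσpos
    · have hV0 : V = 0 := by rw [← hσ2, ← hσ0]; ring
      have hz : ∀ x ∈ Sc, (∏ l, p (x l)) = 0 := by
        intro x hx
        rw [hScdef] at hx
        by_contra hne0
        have hPx : 0 < ∏ l, p (x l) := lt_of_le_of_ne (hPnn x) (Ne.symm hne0)
        have hc := (Finset.mem_filter.mp hx).2
        push_neg at hc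
        have h1 : t ^ 2 < (∑ i, f (x i)) ^ 2 := hc hPx
        have ht0 : t = 0 := by rw [htdef, ← hσ0, zero_mul]
        have hall : (∏ l, p (x l)) * (∑ i, f (x i)) ^ 2 = 0 := by
          have hnnall : ∀ y ∈ (Finset.univ : Finset (Fin n → Fin d)),
              0 ≤ (∏ l, p (y l)) * (∑ i, f (y i)) ^ 2 :=
            fun y _ => mul_nonneg (hPnn y) (sq_nonneg _)
          exact (Finset.sum_eq_zero_iff_of_nonneg hnnall).mp
            (by rw [key, hV0, mul_zero]) x (Finset.mem_univ x)
        nlinarith [hall, sq_nonneg t]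
      rw [Finset.sum_eq_zero hz]
      exact le_of_lt hε0
    · have hVpos : 0 < V := by nlinarith [hσ2]
      have ht2pos : 0 < t ^ 2 := by rw [ht2]; positivity
      have h1 : ∑ x ∈ Sc, ∏ l, p (x l) ≤ (↑n * V) / t ^ 2 := by
        rw [le_div_iff₀ ht2pos]
        linarith [hsum1]
      have h2 : (↑n * V) / t ^ 2 = ε := by
        rw [ht2, hσ2]
        field_simp
      linarith
  have hsplit := Finset.sum_filter_add_sum_filter_not Finset.univ
    (fun x : Fin n → Fin d => 0 < ∏ l, p (x l) ∧ (∑ i, f (x i)) ^ 2 ≤ t ^ 2)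
    (fun x : Fin n → Fin d => ∏ l, p (x l))
  have hSsum : 1 - ε ≤ ∑ x ∈ S, ∏ l, p (x l) := by
    rw [htot] at hsplit
    have : ∑ x ∈ S, ∏ l, p (x l) = 1 - ∑ x ∈ Sc, ∏ l, p (x l) := by
      rw [hSdef, hScdef]; linarith [hsplit]
    rw [this]; linarith
  have hSne : S.Nonempty := by
    rw [Finset.nonempty_iff_ne_empty]
    intro h
    rw [h, Finset.sum_empty] at hSsum
    linarith
  have hmem : ∀ x ∈ S, 0 < (∏ l, p (x l)) ∧ (∑ i, f (x i)) ^ 2 ≤ t ^ 2 := by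
    intro x hx
    rw [hSdef] at hx
    exact (Finset.mem_filter.mp hx).2
  have hlogP : ∀ x ∈ S, Real.logb 2 (∏ l, p (x l)) = (∑ i, f (x i)) - ↑n * E := by
    intro x hx
    have hPx := (hmem x hx).1
    have hpi : ∀ i, p (x i) ≠ 0 := by
      intro i hi
      have : (∏ l, p (x l)) = 0 := Finset.prod_eq_zero (Finset.mem_univ i) hi
      rw [this] at hPx; exact lt_irrefl 0 hPx
    have h1 : Real.logb 2 (∏ l, p (x l)) = ∑ l, Real.logb 2 (p (x l)) :=
      Real.logb_prod _ _ (fun l _ => hpi l)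
    have h2 : ∑ i : Fin n, f (x i) = (∑ l, Real.logb 2 (p (x l))) + ↑n * E := by
      rw [hfdef]
      rw [Finset.sum_add_distrib, Finset.sum_const, Finset.card_univ, Fintype.card_fin,
        nsmul_eq_mul]
    rw [h1]; linarith [h2]
  have habs : ∀ x ∈ S, -t ≤ (∑ i, f (x i)) ∧ (∑ i, f (x i)) ≤ t := by
    intro x hx
    have h2 := (hmem x hx).2
    have h3 : |∑ i, f (x i)| ≤ t := by
      have h4 := Real.sqrt_le_sqrt h2
      rwa [Real.sqrt_sq_eq_abs, Real.sqrt_sq htnn] at h4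
    exact abs_le.mp h3
  have hupper : ∀ x ∈ S, (∏ l, p (x l)) ≤ (2 : ℝ) ^ (t - ↑n * E) := by
    intro x hx
    have h1 : Real.logb 2 (∏ l, p (x l)) ≤ t - ↑n * E := by
      rw [hlogP x hx]; linarith [(habs x hx).2]
    calc (∏ l, p (x l)) = (2 : ℝ) ^ Real.logb 2 (∏ l, p (x l)) :=
          (Real.rpow_logb two_pos (by norm_num) (hmem x hx).1).symm
      _ ≤ (2 : ℝ) ^ (t - ↑n * E) := Real.rpow_le_rpow_of_exponent_le one_le_two h1
  have hlower : ∀ x ∈ S, (2 : ℝ) ^ (-t - ↑n * E) ≤ ∏ l, p (x l) := by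
    intro x hx
    have h1 : -t - ↑n * E ≤ Real.logb 2 (∏ l, p (x l)) := by
      rw [hlogP x hx]; linarith [(habs x hx).1]
    calc (2 : ℝ) ^ (-t - ↑n * E) ≤ (2 : ℝ) ^ Real.logb 2 (∏ l, p (x l)) :=
          Real.rpow_le_rpow_of_exponent_le one_le_two h1
      _ = ∏ l, p (x l) := Real.rpow_logb two_pos (by norm_num) (hmem x hx).1
  have hcard : (S.card : ℝ) * (2 : ℝ) ^ (-t - ↑n * E) ≤ 1 := by
    calc (S.card : ℝ) * (2 : ℝ) ^ (-t - ↑n * E)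
        = ∑ _x ∈ S, (2 : ℝ) ^ (-t - ↑n * E) := by
          rw [Finset.sum_const, nsmul_eq_mul]
      _ ≤ ∑ x ∈ S, ∏ l, p (x l) := Finset.sum_le_sum hlower
      _ ≤ ∑ x : Fin n → Fin d, ∏ l, p (x l) :=
          Finset.sum_le_sum_of_subset_of_nonneg (Finset.subset_univ S)
            (fun x _ _ => hPnn x)
      _ = 1 := htot
  have hrpos : (0 : ℝ) < (2 : ℝ) ^ (-t - ↑n * E) := Real.rpow_pos_of_pos two_pos _
  have hcardle : (S.card : ℝ) ≤ (2 : ℝ) ^ (t + ↑n * E) := by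
    have h1 : (S.card : ℝ) ≤ 1 / (2 : ℝ) ^ (-t - ↑n * E) := by
      rw [le_div_iff₀ hrpos]; linarith [hcard]
    have h2 : (1 : ℝ) / (2 : ℝ) ^ (-t - ↑n * E) = (2 : ℝ) ^ (t + ↑n * E) := by
      rw [one_div, ← Real.rpow_neg (by norm_num : (0:ℝ) ≤ 2)]
      congr 1; ring
    linarith [h1, h2.le, h2.ge]
  have hcardpos : (0 : ℝ) < (S.card : ℝ) := by
    exact_mod_cast Finset.card_pos.mpr hSne
  have hlog1 : Real.logb 2 (S.card : ℝ) ≤ t + ↑n * E :=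
    (Real.logb_le_iff_le_rpow one_lt_two hcardpos).mpr hcardle
  have hMle : S.sup' hSne (fun x => ∏ l, p (x l)) ≤ (2 : ℝ) ^ (t - ↑n * E) :=
    Finset.sup'_le _ _ hupper
  have hMpos : 0 < S.sup' hSne (fun x => ∏ l, p (x l)) := by
    obtain ⟨x0, hx0⟩ := hSne
    exact lt_of_lt_of_le (hmem x0 hx0).1 (Finset.le_sup' (fun x => ∏ l, p (x l)) hx0)
  have hlog2 : Real.logb 2 (S.sup' hSne (fun x => ∏ l, p (x l))) ≤ t - ↑n * E :=
    (Real.logb_le_iff_le_rpow one_lt_two hMpos).mpr hMle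
  refine ⟨S, hSne, hSsum, ?_⟩
  have h2t : (2 : ℝ) * σ * Real.sqrt (↑n / ε) = 2 * t := by rw [htdef]; ring
  rw [h2t]
  linarith [hlog1, hlog2]
end

section
/- For natural numbers N ≥ 1 and r ≥ 1, with H_k := ∑_{i=1}^{k} 1/i denoting the k-th harmonic number, the following fidelity bound for embezzlement holds: ∑_{j=1}^{N·r} √( (1/(j · H_{Nr})) · (1/(r · ⌈j/r⌉ · H_N)) ) ≥ √( H_N / H_{Nr} ). The left-hand side is the overlap between the Schmidt-coefficient vector of the embezzling state of Schmidt rank Nr and the decreasingly sorted Schmidt-coefficient vector of the embezzling state of Schmidt rank N tensored with a maximally entangled state of Schmidt rank r. -/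
noncomputable def harm (k : ℕ) : ℝ := ∑ i ∈ Finset.range k, (1 : ℝ) / (i + 1)

lemma harm_pos {k : ℕ} (hk : 1 ≤ k) : 0 < harm k := by
  apply Finset.sum_pos
  · intro i _; positivity
  · exact Finset.nonempty_range_iff.mpr (by omega)

lemma nat_lt_succ_div_mul (k r : ℕ) (hr : 1 ≤ r) : k + 1 ≤ (k / r + 1) * r := by
  have hq := Nat.div_add_mod k r
  have hm := Nat.mod_lt k (show 0 < r by omega)
  calc k + 1 = r * (k / r) + k % r + 1 := by omega
    _ ≤ r * (k / r) + r := by omega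
    _ = (k / r + 1) * r := by ring

lemma ceil_cast_div (r k : ℕ) (hr : 1 ≤ r) :
    (⌈(((1 + k : ℕ) : ℝ)) / (r : ℝ)⌉ : ℤ) = ((k / r + 1 : ℕ) : ℤ) := by
  have hr' : (0:ℝ) < r := by exact_mod_cast hr
  have h1 : ((k / r : ℕ) : ℝ) * r ≤ k := by exact_mod_cast Nat.div_mul_le_self k r
  have h2 : ((k : ℝ) + 1) ≤ ((k / r : ℕ) : ℝ) * r + r := by
    calc ((k:ℝ) + 1) ≤ (((k / r + 1) * r : ℕ) : ℝ) := by
          exact_mod_cast nat_lt_succ_div_mul k r hr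
      _ = ((k / r : ℕ) : ℝ) * r + r := by
          rw [Nat.cast_mul, Nat.cast_add, Nat.cast_one]; ring
  rw [Int.ceil_eq_iff]
  simp only [Int.cast_add, Int.cast_natCast, Int.cast_one, Nat.cast_add, Nat.cast_one]
  constructor
  · have he : ((k/r:ℕ):ℝ) + 1 - 1 = ((k/r:ℕ):ℝ) := by ring
    rw [he, lt_div_iff₀ hr']
    linarith
  · rw [div_le_iff₀ hr']
    nlinarith

lemma block_sum (N r : ℕ) (hr : 1 ≤ r) :
    ∑ k ∈ Finset.range (N * r), (1 : ℝ) / ((r : ℝ) * ((k / r : ℕ) + 1)) = harm N := by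
  induction N with
  | zero => simp [harm]
  | succ n ih =>
    have hsplit : (n + 1) * r = n * r + r := by ring
    rw [hsplit, Finset.range_eq_Ico,
      ← Finset.sum_Ico_consecutive _ (Nat.zero_le (n * r)) (Nat.le_add_right (n * r) r),
      ← Finset.range_eq_Ico, ih]
    have hc : ∀ k ∈ Finset.Ico (n * r) (n * r + r),
        (1 : ℝ) / ((r : ℝ) * ((k / r : ℕ) + 1)) = 1 / ((r : ℝ) * ((n : ℝ) + 1)) := by
      intro k hk
      simp only [Finset.mem_Ico] at hk
      have : k / r = n := by
        apply Nat.div_eq_of_lt_le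
        · exact hk.1
        · calc k < n * r + r := hk.2
            _ = (n + 1) * r := by ring
      rw [this]
    rw [Finset.sum_congr rfl hc, Finset.sum_const, Nat.card_Ico]
    have hr' : (0:ℝ) < r := by exact_mod_cast hr
    have hn1 : ((n:ℝ) + 1) ≠ 0 := by positivity
    have hcard : (n * r + r - n * r : ℕ) = r := by omega
    have hh : harm (n + 1) = harm n + 1 / ((n : ℝ) + 1) := by
      rw [harm, harm, Finset.sum_range_succ]
    rw [hcard, nsmul_eq_mul, hh]
    field_simp

/-- Fidelity bound for embezzlement: the overlap between the Schmidt-coefficient vector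
of the rank-`Nr` embezzling state and the sorted Schmidt-coefficient vector of the
rank-`N` embezzling state tensored with a rank-`r` maximally entangled state satisfies
`∑_{j=1}^{Nr} √((1/(j·H_{Nr}))·(1/(r·⌈j/r⌉·H_N))) ≥ √(H_N / H_{Nr})`. -/
theorem embezzlement_fidelity (N r : ℕ) (hN : 1 ≤ N) (hr : 1 ≤ r) :
    Real.sqrt (harm N / harm (N * r)) ≤
      ∑ j ∈ Finset.Icc 1 (N * r),
        Real.sqrt ((1 / ((j : ℝ) * harm (N * r))) *
          (1 / ((r : ℝ) * ((⌈(j : ℝ) / (r : ℝ)⌉ : ℤ) : ℝ) * harm N))) := by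
  have hH1 : 0 < harm N := harm_pos hN
  have hH2 : 0 < harm (N * r) := harm_pos (Nat.one_le_iff_ne_zero.mpr (by positivity))
  have hr' : (0:ℝ) < r := by exact_mod_cast hr
  rw [← Finset.Ico_add_one_right_eq_Icc, Finset.sum_Ico_eq_sum_range]
  have hrange : N * r + 1 - 1 = N * r := by omega
  rw [hrange]
  have key : ∀ k ∈ Finset.range (N * r),
      (1 : ℝ) / ((r : ℝ) * ((k / r : ℕ) + 1)) * (Real.sqrt (harm N / harm (N * r)) / harm N)
        ≤ Real.sqrt ((1 / (((1 + k : ℕ) : ℝ) * harm (N * r))) *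
            (1 / ((r : ℝ) * ((⌈((1 + k : ℕ) : ℝ) / (r : ℝ)⌉ : ℤ) : ℝ) * harm N))) := by
    intro k _
    rw [ceil_cast_div r k hr]
    set c : ℝ := ((k / r : ℕ) : ℝ) with hc
    have hc0 : 0 ≤ c := by positivity
    set M : ℝ := (r : ℝ) * (c + 1) with hM
    have hM0 : 0 < M := by positivity
    have hkM : ((k : ℝ) + 1) ≤ M := by
      have := nat_lt_succ_div_mul k r hr
      calc ((k:ℝ) + 1) ≤ (((k / r + 1) * r : ℕ) : ℝ) := by exact_mod_cast this
        _ = M := by rw [Nat.cast_mul, Nat.cast_add, Nat.cast_one, hM]; ring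
    have hcast : ((((k / r + 1 : ℕ) : ℤ)) : ℝ) = c + 1 := by
      rw [Int.cast_natCast, Nat.cast_add, Nat.cast_one]
    have hcast2 : (((1 + k : ℕ)) : ℝ) = (k : ℝ) + 1 := by push_cast; ring
    rw [hcast, hcast2]
    -- RHS = 1 / sqrt ((k+1) * M * (harm (N*r)) * harm N)
    have hRHS : (1 / (((k:ℝ) + 1) * harm (N * r))) * (1 / (M * harm N))
        = 1 / ((((k:ℝ) + 1) * M) * (harm N * harm (N * r))) := by
      field_simp
    rw [hRHS]
    have hx0 : (0:ℝ) ≤ M⁻¹ * (Real.sqrt (harm N / harm (N * r)) / harm N) := by positivity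
    have hgoal : (1 / M * (Real.sqrt (harm N / harm (N * r)) / harm N)) ^ 2
        ≤ 1 / ((((k:ℝ) + 1) * M) * (harm N * harm (N * r))) := by
      have hs : Real.sqrt (harm N / harm (N * r)) ^ 2 = harm N / harm (N * r) :=
        Real.sq_sqrt (by positivity)
      have heq : (1 / M * (Real.sqrt (harm N / harm (N * r)) / harm N)) ^ 2
          = 1 / ((M * M) * (harm N * harm (N * r))) := by
        rw [mul_pow, div_pow, div_pow, hs]
        field_simp
      rw [heq]
      apply one_div_le_one_div_of_le (by positivity)
      exact mul_le_mul_of_nonneg_right (mul_le_mul_of_nonneg_right hkM hM0.le) (mul_pos hH1 hH2).le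
    calc 1 / M * (Real.sqrt (harm N / harm (N * r)) / harm N)
        = Real.sqrt ((1 / M * (Real.sqrt (harm N / harm (N * r)) / harm N)) ^ 2) := by
          rw [Real.sqrt_sq (by positivity)]
      _ ≤ _ := Real.sqrt_le_sqrt hgoal
  calc Real.sqrt (harm N / harm (N * r))
      = (∑ k ∈ Finset.range (N * r), (1:ℝ) / ((r : ℝ) * ((k / r : ℕ) + 1)))
          * (Real.sqrt (harm N / harm (N * r)) / harm N) := by
        rw [block_sum N r hr]; field_simp
    _ = ∑ k ∈ Finset.range (N * r), (1:ℝ) / ((r : ℝ) * ((k / r : ℕ) + 1))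
          * (Real.sqrt (harm N / harm (N * r)) / harm N) := by
        rw [Finset.sum_mul]
    _ ≤ _ := Finset.sum_le_sum key
end

section
/- Let M₀, M₁ : Matrix (Fin a) (Fin b) ℂ. Then, with respect to the ℓ²-operator norm (largest singular value), the horizontal concatenation satisfies ‖fromColumns M₀ M₁‖ ≤ √2 · ‖fromRows M₀ M₁‖, where fromColumns M₀ M₁ is the a×2b matrix [M₀ M₁] and fromRows M₀ M₁ is the 2a×b matrix [M₀; M₁]. Physically, this says that transmitting a single qubit can increase the largest squared Schmidt coefficient of a bipartite pure state by at most a factor of 2. -/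
open Matrix
open scoped Matrix.Norms.L2Operator

lemma l2_opNorm_one_le (n : ℕ) : ‖(1 : Matrix (Fin n) (Fin n) ℂ)‖ ≤ 1 := by
  rw [Matrix.cstar_norm_def, _root_.map_one]
  exact ContinuousLinearMap.norm_id_le

lemma l2_opNorm_self_mul_conjTranspose {m n : Type*} [Fintype m] [Fintype n] [DecidableEq m]
    [DecidableEq n] (A : Matrix m n ℂ) : ‖A * Aᴴ‖ = ‖A‖ * ‖A‖ := by
  have h := Matrix.l2_opNorm_conjTranspose_mul_self Aᴴ
  rwa [conjTranspose_conjTranspose, Matrix.l2_opNorm_conjTranspose] at h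

lemma l2_opNorm_proj_le (a : ℕ) :
    ‖fromCols (1 : Matrix (Fin a) (Fin a) ℂ) (0 : Matrix (Fin a) (Fin a) ℂ)‖ ≤ 1 := by
  set P := fromCols (1 : Matrix (Fin a) (Fin a) ℂ) (0 : Matrix (Fin a) (Fin a) ℂ)
  have h2 : P * Pᴴ = 1 := by
    simp [P, conjTranspose_fromCols_eq_fromRows_conjTranspose, fromCols_mul_fromRows]
  have h3 : ‖P‖ * ‖P‖ ≤ 1 := by
    rw [← l2_opNorm_self_mul_conjTranspose P, h2]; exact l2_opNorm_one_le a
  nlinarith [norm_nonneg P]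

lemma l2_opNorm_swap_proj_le (a : ℕ) :
    ‖fromCols (0 : Matrix (Fin a) (Fin a) ℂ) (1 : Matrix (Fin a) (Fin a) ℂ)‖ ≤ 1 := by
  set P := fromCols (0 : Matrix (Fin a) (Fin a) ℂ) (1 : Matrix (Fin a) (Fin a) ℂ)
  have h2 : P * Pᴴ = 1 := by
    simp [P, conjTranspose_fromCols_eq_fromRows_conjTranspose, fromCols_mul_fromRows]
  have h3 : ‖P‖ * ‖P‖ ≤ 1 := by
    rw [← l2_opNorm_self_mul_conjTranspose P, h2]; exact l2_opNorm_one_le a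
  nlinarith [norm_nonneg P]

lemma l2_opNorm_block_le (a b : ℕ) (M₀ M₁ : Matrix (Fin a) (Fin b) ℂ) :
    ‖M₀‖ ≤ ‖fromRows M₀ M₁‖ ∧ ‖M₁‖ ≤ ‖fromRows M₀ M₁‖ := by
  constructor
  · have hM : M₀ = fromCols (1 : Matrix (Fin a) (Fin a) ℂ) 0 * fromRows M₀ M₁ := by
      erw [fromCols_mul_fromRows]; simp
    calc ‖M₀‖ = ‖fromCols (1 : Matrix (Fin a) (Fin a) ℂ) 0 * fromRows M₀ M₁‖ := congrArg norm hM
    _ ≤ ‖fromCols (1 : Matrix (Fin a) (Fin a) ℂ) 0‖ * ‖fromRows M₀ M₁‖ :=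
        Matrix.l2_opNorm_mul _ _
    _ ≤ 1 * ‖fromRows M₀ M₁‖ :=
        mul_le_mul_of_nonneg_right (l2_opNorm_proj_le a) (norm_nonneg _)
    _ = ‖fromRows M₀ M₁‖ := one_mul _
  · have hM : M₁ = fromCols (0 : Matrix (Fin a) (Fin a) ℂ) 1 * fromRows M₀ M₁ := by
      erw [fromCols_mul_fromRows]; simp
    calc ‖M₁‖ = ‖fromCols (0 : Matrix (Fin a) (Fin a) ℂ) 1 * fromRows M₀ M₁‖ := congrArg norm hM
    _ ≤ ‖fromCols (0 : Matrix (Fin a) (Fin a) ℂ) 1‖ * ‖fromRows M₀ M₁‖ :=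
        Matrix.l2_opNorm_mul _ _
    _ ≤ 1 * ‖fromRows M₀ M₁‖ :=
        mul_le_mul_of_nonneg_right (l2_opNorm_swap_proj_le a) (norm_nonneg _)
    _ = ‖fromRows M₀ M₁‖ := one_mul _

/-- Transmitting one qubit increases the largest squared Schmidt coefficient by at most
a factor of 2: in the ℓ²-operator norm (largest singular value), the horizontal
concatenation `[M₀ M₁]` satisfies `‖[M₀ M₁]‖ ≤ √2 · ‖[M₀; M₁]‖`. -/
theorem l2_opNorm_fromColumns_le (a b : ℕ) (M₀ M₁ : Matrix (Fin a) (Fin b) ℂ) :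
    ‖fromCols M₀ M₁‖ ≤ Real.sqrt 2 * ‖fromRows M₀ M₁‖ := by
  obtain ⟨h0, h1⟩ := l2_opNorm_block_le a b M₀ M₁
  set C := fromCols M₀ M₁
  set R := fromRows M₀ M₁
  have hprod : C * Cᴴ = M₀ * M₀ᴴ + M₁ * M₁ᴴ := by
    rw [show Cᴴ = fromRows M₀ᴴ M₁ᴴ from
      conjTranspose_fromCols_eq_fromRows_conjTranspose M₀ M₁,
      fromCols_mul_fromRows]
  have hsq : ‖C‖ * ‖C‖ ≤ 2 * (‖R‖ * ‖R‖) := by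
    rw [← l2_opNorm_self_mul_conjTranspose C, hprod]
    calc ‖M₀ * M₀ᴴ + M₁ * M₁ᴴ‖ ≤ ‖M₀ * M₀ᴴ‖ + ‖M₁ * M₁ᴴ‖ := norm_add_le _ _
    _ = ‖M₀‖ * ‖M₀‖ + ‖M₁‖ * ‖M₁‖ := by
        rw [l2_opNorm_self_mul_conjTranspose, l2_opNorm_self_mul_conjTranspose]
    _ ≤ ‖R‖ * ‖R‖ + ‖R‖ * ‖R‖ := by
        gcongr
    _ = 2 * (‖R‖ * ‖R‖) := by ring
  have hsq' : ‖C‖ ^ 2 ≤ 2 * ‖R‖ ^ 2 := by nlinarith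
  calc ‖C‖ = Real.sqrt (‖C‖ ^ 2) := (Real.sqrt_sq (norm_nonneg C)).symm
  _ ≤ Real.sqrt (2 * ‖R‖ ^ 2) := Real.sqrt_le_sqrt hsq'
  _ = Real.sqrt 2 * ‖R‖ := by
      rw [Real.sqrt_mul (by norm_num), Real.sqrt_sq (norm_nonneg R)]
end
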